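/- For p ≥ 1 and −1 ≤ α,β ≤ 1, the minimum of tr(C_{symm,p} Π) over all positive semidefinite Π ∈ M₄(ℂ) with trace 1 whose partial trace over the first tensor factor is diag((1+α)/2,(1−α)/2) and whose partial trace over the second tensor factor is diag((1+β)/2,(1−β)/2), equals 2^p (1 + |α−β|/2 − √((1+min(α,β))(1−max(α,β)))). Here C_{symm,p} = [[2^p,0,0,−2^p],[0,2^{p+1},0,0],[0,0,2^{p+1},0],[−2^p,0,0,2^p]]. -/

import Mathlib

open Matrix
open scoped ComplexOrder

noncomputable section

/-- Partial trace over the second tensor factor of `M₄(ℂ) ≅ M₂(ℂ) ⊗ M₂(ℂ)`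
(index ordering `(i,k) ↦ 2*i + k`). -/
def ptrace2 (A : Matrix (Fin 4) (Fin 4) ℂ) : Matrix (Fin 2) (Fin 2) ℂ :=
  !![A 0 0 + A 1 1, A 0 2 + A 1 3; A 2 0 + A 3 1, A 2 2 + A 3 3]

/-- Partial trace over the first tensor factor. -/
def ptrace1 (A : Matrix (Fin 4) (Fin 4) ℂ) : Matrix (Fin 2) (Fin 2) ℂ :=
  !![A 0 0 + A 2 2, A 0 1 + A 2 3; A 1 0 + A 3 2, A 1 1 + A 3 3]

/-- Kronecker product `M₂(ℂ) × M₂(ℂ) → M₄(ℂ)` with index ordering `(i,k) ↦ 2*i + k`. -/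
def kron (A B : Matrix (Fin 2) (Fin 2) ℂ) : Matrix (Fin 4) (Fin 4) ℂ :=
  !![A 0 0 * B 0 0, A 0 0 * B 0 1, A 0 1 * B 0 0, A 0 1 * B 0 1;
     A 0 0 * B 1 0, A 0 0 * B 1 1, A 0 1 * B 1 0, A 0 1 * B 1 1;
     A 1 0 * B 0 0, A 1 0 * B 0 1, A 1 1 * B 0 0, A 1 1 * B 0 1;
     A 1 0 * B 1 0, A 1 0 * B 1 1, A 1 1 * B 1 0, A 1 1 * B 1 1]

def σx : Matrix (Fin 2) (Fin 2) ℂ := !![0, 1; 1, 0]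
def σy : Matrix (Fin 2) (Fin 2) ℂ := !![0, -Complex.I; Complex.I, 0]
def σz : Matrix (Fin 2) (Fin 2) ℂ := !![1, 0; 0, -1]

/-- The symmetric cost operator `C_{symm,p}`. -/
def Csymm (p : ℝ) : Matrix (Fin 4) (Fin 4) ℂ :=
  !![(((2:ℝ)^p : ℝ) : ℂ), 0, 0, -(((2:ℝ)^p : ℝ) : ℂ);
     0, (((2:ℝ)^(p+1) : ℝ) : ℂ), 0, 0;
     0, 0, (((2:ℝ)^(p+1) : ℝ) : ℂ), 0;
     -(((2:ℝ)^p : ℝ) : ℂ), 0, 0, (((2:ℝ)^p : ℝ) : ℂ)]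

/-- The single-observable cost operator `C_{z,p} = diag(0, 2^p, 2^p, 0)`. -/
def Cz (p : ℝ) : Matrix (Fin 4) (Fin 4) ℂ :=
  !![0, 0, 0, 0;
     0, (((2:ℝ)^p : ℝ) : ℂ), 0, 0;
     0, 0, (((2:ℝ)^p : ℝ) : ℂ), 0;
     0, 0, 0, 0]

set_option maxHeartbeats 1000000 in
lemma psd_diag_re_aux (P : Matrix (Fin 4) (Fin 4) ℂ) (hP : P.PosSemidef) (i : Fin 4) :
    P i i = ((P i i).re : ℂ) ∧ 0 ≤ (P i i).re := by
  have h : (0:ℂ) ≤ P i i := by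
    fin_cases i
    · simpa [dotProduct, Matrix.mulVec, Fin.sum_univ_four] using hP.dotProduct_mulVec_nonneg ![1,0,0,0]
    · simpa [dotProduct, Matrix.mulVec, Fin.sum_univ_four] using hP.dotProduct_mulVec_nonneg ![0,1,0,0]
    · simpa [dotProduct, Matrix.mulVec, Fin.sum_univ_four] using hP.dotProduct_mulVec_nonneg ![0,0,1,0]
    · simpa [dotProduct, Matrix.mulVec, Fin.sum_univ_four] using hP.dotProduct_mulVec_nonneg ![0,0,0,1]
  obtain ⟨h1, h2⟩ := Complex.le_def.mp h
  refine ⟨Complex.ext (by simp) (by simpa using h2.symm), by simpa using h1⟩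

set_option maxHeartbeats 1000000 in
lemma psd_quad_aux (P : Matrix (Fin 4) (Fin 4) ℂ) (hP : P.PosSemidef) (t : ℝ) :
    0 ≤ (P 0 0).re * (t * t) + (2 * (P 0 3).re) * t + (P 3 3).re := by
  have h30 : P 3 0 = (starRingEnd ℂ) (P 0 3) := by rw [← hP.1.apply 0 3]; simp
  have h := (Complex.le_def.mp (hP.dotProduct_mulVec_nonneg ![(t:ℂ), 0, 0, 1])).1
  have hE : (star ![(t:ℂ), 0, 0, 1] ⬝ᵥ P *ᵥ ![(t:ℂ), 0, 0, 1]).re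
      = (P 0 0).re * (t * t) + (2 * (P 0 3).re) * t + (P 3 3).re := by
    simp [dotProduct, Matrix.mulVec, Fin.sum_univ_four, h30, Complex.add_re,
      Complex.mul_re, Complex.conj_ofReal, Complex.ofReal_re, Complex.ofReal_im,
      Complex.conj_re, Complex.conj_im]
    ring
  rw [hE] at h
  simpa using h

set_option maxHeartbeats 1000000 in
lemma cost_re_aux (p : ℝ) (P : Matrix (Fin 4) (Fin 4) ℂ)
    (h30 : P 3 0 = (starRingEnd ℂ) (P 0 3)) :
    ((Csymm p * P).trace).re
      = (2:ℝ)^p * (P 0 0).re + (2:ℝ)^(p+1) * (P 1 1).re + (2:ℝ)^(p+1) * (P 2 2).re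
        + (2:ℝ)^p * (P 3 3).re - (2:ℝ)^p * (2 * (P 0 3).re) := by
  simp [Csymm, Matrix.trace, Matrix.diag, Matrix.mul_apply, Fin.sum_univ_four, h30,
    Matrix.vecHead, Matrix.vecTail, Complex.add_re, Complex.mul_re, Complex.ofReal_re,
    Complex.ofReal_im, Complex.conj_re, Complex.conj_im]
  ring

set_option maxHeartbeats 1000000 in
/-- the optimal symmetric transport cost between the commuting qubit
states `ρ(α)` and `ρ(β)` equals `2^p (1 + |α−β|/2 − √((1+min)(1−max)))`. -/
theorem stmt_4 (p : ℝ) (hp : 1 ≤ p) (α β : ℝ) (hα₁ : -1 ≤ α) (hα₂ : α ≤ 1)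
    (hβ₁ : -1 ≤ β) (hβ₂ : β ≤ 1) :
    IsLeast {x : ℝ | ∃ P : Matrix (Fin 4) (Fin 4) ℂ, P.PosSemidef ∧ P.trace = 1 ∧
        ptrace1 P = !![(((1 + α)/2 : ℝ) : ℂ), 0; 0, (((1 - α)/2 : ℝ) : ℂ)] ∧
        ptrace2 P = !![(((1 + β)/2 : ℝ) : ℂ), 0; 0, (((1 - β)/2 : ℝ) : ℂ)] ∧
        (Csymm p * P).trace = (x : ℂ)}
      ((2:ℝ)^p * (1 + |α - β|/2 - Real.sqrt ((1 + min α β) * (1 - max α β)))) := by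
  have hmm : min α β + max α β = α + β := min_add_max α β
  have habs : max α β - min α β = |α - β| := by
    rw [max_sub_min_eq_abs, abs_sub_comm]
  have hm1 : -1 ≤ min α β := le_min hα₁ hβ₁
  have hM1 : max α β ≤ 1 := max_le hα₂ hβ₂
  have hαM : α ≤ max α β := le_max_left α β
  have hβM : β ≤ max α β := le_max_right α β
  set c : ℝ := (2:ℝ)^p with hc
  have hcpos : (0:ℝ) < c := Real.rpow_pos_of_pos two_pos p
  have hc2 : (2:ℝ)^(p+1) = 2*c := by
    rw [hc, Real.rpow_add two_pos, Real.rpow_one]; ring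
  set s : ℝ := Real.sqrt ((1 + min α β) * (1 - max α β)) with hs
  have hsnn : 0 ≤ s := Real.sqrt_nonneg _
  have hssq : s * s = (1 + min α β) * (1 - max α β) :=
    Real.mul_self_sqrt (by nlinarith)
  constructor
  · -- membership: explicit optimal coupling
    set d0 : ℝ := (1 + min α β)/2 with hd0def
    set d1 : ℝ := (max α β - α)/2 with hd1def
    set d2 : ℝ := (max α β - β)/2 with hd2def
    set d3 : ℝ := (1 - max α β)/2 with hd3def
    have hd0 : 0 ≤ d0 := by rw [hd0def]; linarith
    have hd1 : 0 ≤ d1 := by rw [hd1def]; linarith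
    have hd2 : 0 ≤ d2 := by rw [hd2def]; linarith
    have hd3 : 0 ≤ d3 := by rw [hd3def]; linarith
    set r0 : ℝ := Real.sqrt d0 with hr0
    set r3 : ℝ := Real.sqrt d3 with hr3
    set r1 : ℝ := Real.sqrt d1 with hr1
    set r2 : ℝ := Real.sqrt d2 with hr2
    have h00 : r0 * r0 = d0 := Real.mul_self_sqrt hd0
    have h11 : r1 * r1 = d1 := Real.mul_self_sqrt hd1
    have h22 : r2 * r2 = d2 := Real.mul_self_sqrt hd2
    have h33 : r3 * r3 = d3 := Real.mul_self_sqrt hd3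
    have hq : 2 * (r0 * r3) = s := by
      have h4 : (1 + min α β) * (1 - max α β) = (2*(r0*r3))^2 := by
        have e0 : r0 * r0 = (1 + min α β)/2 := by rw [h00, hd0def]
        have e3 : r3 * r3 = (1 - max α β)/2 := by rw [h33, hd3def]
        linear_combination (-4*(r3*r3))*e0 + (-2*(1 + min α β))*e3
      rw [hs, h4, Real.sqrt_sq (by positivity)]
    have hsum : d0 + d1 + d2 + d3 = 1 := by
      rw [hd0def, hd1def, hd2def, hd3def]; linarith
    have e1 : d0 + d2 = (1 + α)/2 := by rw [hd0def, hd2def]; linarith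
    have e2 : d1 + d3 = (1 - α)/2 := by rw [hd1def, hd3def]; linarith
    have e3 : d0 + d1 = (1 + β)/2 := by rw [hd0def, hd1def]; linarith
    have e4 : d2 + d3 = (1 - β)/2 := by rw [hd2def, hd3def]; linarith
    have key : c*d0 + 2*c*d1 + 2*c*d2 + c*d3 - c*(r0*r3) - c*(r0*r3)
        = c * (1 + |α - β|/2 - s) := by
      have h1 : d0 + d3 + 2*d1 + 2*d2 = 1 + |α - β|/2 := by
        rw [← habs, hd0def, hd1def, hd2def, hd3def]; linarith [hmm]
      linear_combination c*h1 - c*hq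
    set B : Matrix (Fin 4) (Fin 4) ℂ :=
      !![(r0:ℂ),0,0,(r3:ℂ); 0,(r1:ℂ),0,0; 0,0,(r2:ℂ),0; 0,0,0,0] with hB
    have hPi : Bᴴ * B =
        !![((d0:ℝ):ℂ),0,0,((r0*r3:ℝ):ℂ); 0,((d1:ℝ):ℂ),0,0; 0,0,((d2:ℝ):ℂ),0;
           ((r0*r3:ℝ):ℂ),0,0,((d3:ℝ):ℂ)] := by
      rw [← h00, ← h11, ← h22, ← h33]
      ext i j
      fin_cases i <;> fin_cases j <;>
        simp [hB, Matrix.mul_apply, Fin.sum_univ_four, Complex.conj_ofReal,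
          Matrix.vecHead, Matrix.vecTail] <;> ring_nf
    clear_value d0 d1 d2 d3 r0 r1 r2 r3 s c B
    refine ⟨Bᴴ * B, posSemidef_conjTranspose_mul_self B, ?_, ?_, ?_, ?_⟩
    · rw [hPi]
      simp [Matrix.trace, Matrix.diag, Fin.sum_univ_four]
      norm_cast
    · rw [hPi]
      ext i j
      fin_cases i <;> fin_cases j
      · simp [ptrace1, Matrix.vecHead, Matrix.vecTail]; rw [← Complex.ofReal_add, e1]; simp
      · simp [ptrace1, Matrix.vecHead, Matrix.vecTail]
      · simp [ptrace1, Matrix.vecHead, Matrix.vecTail]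
      · simp [ptrace1, Matrix.vecHead, Matrix.vecTail]; rw [← Complex.ofReal_add, e2]; simp
    · rw [hPi]
      ext i j
      fin_cases i <;> fin_cases j
      · simp [ptrace2, Matrix.vecHead, Matrix.vecTail]; rw [← Complex.ofReal_add, e3]; simp
      · simp [ptrace2, Matrix.vecHead, Matrix.vecTail]
      · simp [ptrace2, Matrix.vecHead, Matrix.vecTail]
      · simp [ptrace2, Matrix.vecHead, Matrix.vecTail]; rw [← Complex.ofReal_add, e4]; simp
    · rw [hPi]
      have : (Csymm p *
          !![((d0:ℝ):ℂ),0,0,((r0*r3:ℝ):ℂ); 0,((d1:ℝ):ℂ),0,0; 0,0,((d2:ℝ):ℂ),0;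
             ((r0*r3:ℝ):ℂ),0,0,((d3:ℝ):ℂ)]).trace
          = ((c*d0 + 2*c*d1 + 2*c*d2 + c*d3 - c*(r0*r3) - c*(r0*r3) : ℝ) : ℂ) := by
        simp [Csymm, Matrix.trace, Matrix.diag, Matrix.mul_apply, Fin.sum_univ_four,
          Matrix.vecHead, Matrix.vecTail, hc2, ← hc]
        push_cast
        ring
      rw [this, key]
  · -- lower bound
    rintro x ⟨P, hP, -, h1, h2, hx⟩
    obtain ⟨hP00, hu⟩ := psd_diag_re_aux P hP 0
    obtain ⟨hP11, hw1⟩ := psd_diag_re_aux P hP 1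
    obtain ⟨hP22, hw2⟩ := psd_diag_re_aux P hP 2
    obtain ⟨hP33, hv⟩ := psd_diag_re_aux P hP 3
    have h30 : P 3 0 = (starRingEnd ℂ) (P 0 3) := by rw [← hP.1.apply 0 3]; simp
    set u := (P 0 0).re with hudef
    set w1 := (P 1 1).re with hw1def
    set w2 := (P 2 2).re with hw2def
    set v := (P 3 3).re with hvdef
    set r := (P 0 3).re with hrdef
    have m1 : u + w2 = (1 + α)/2 := by
      have := congrArg Complex.re (congrFun (congrFun h1 0) 0)
      simpa [ptrace1, Matrix.vecHead, Matrix.vecTail] using this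
    have m2 : w1 + v = (1 - α)/2 := by
      have := congrArg Complex.re (congrFun (congrFun h1 1) 1)
      simpa [ptrace1, Matrix.vecHead, Matrix.vecTail] using this
    have m3 : u + w1 = (1 + β)/2 := by
      have := congrArg Complex.re (congrFun (congrFun h2 0) 0)
      simpa [ptrace2, Matrix.vecHead, Matrix.vecTail] using this
    have m4 : w2 + v = (1 - β)/2 := by
      have := congrArg Complex.re (congrFun (congrFun h2 1) 1)
      simpa [ptrace2, Matrix.vecHead, Matrix.vecTail] using this
    have hdisc : discrim u (2*r) v ≤ 0 :=
      discrim_le_zero (fun t => psd_quad_aux P hP t)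
    have hr2 : r * r ≤ u * v := by
      rw [discrim] at hdisc; nlinarith
    have hu1 : u ≤ (1 + min α β)/2 := by
      rcases min_cases α β with ⟨h,_⟩|⟨h,_⟩ <;> rw [h] <;> linarith
    have hv1 : v ≤ (1 - max α β)/2 := by
      rcases max_cases α β with ⟨h,_⟩|⟨h,_⟩ <;> rw [h] <;> linarith
    have huv : u * v ≤ (1 + min α β)/2 * ((1 - max α β)/2) :=
      mul_le_mul hu1 hv1 hv (by linarith)
    have hrs : 2 * r ≤ s := by
      nlinarith [sq_nonneg (s - 2*r), sq_nonneg (s + 2*r)]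
    have hw : |α - β|/2 ≤ w1 + w2 := by
      rcases abs_cases (α - β) with ⟨h,_⟩|⟨h,_⟩ <;> rw [h] <;> linarith
    have hre : (2:ℝ)^p * u + (2:ℝ)^(p+1) * w1 + (2:ℝ)^(p+1) * w2 + (2:ℝ)^p * v
        - (2:ℝ)^p * (2*r) = x := by
      rw [← cost_re_aux p P h30, hx]
      simp
    have hxval : x = c*u + 2*c*w1 + 2*c*w2 + c*v - c*(2*r) := by
      rw [← hre, hc2, ← hc]
    rw [hxval]
    have l1 : c * (|α - β|/2) ≤ c * (w1 + w2) := mul_le_mul_of_nonneg_left hw hcpos.le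
    have l2 : c * (2*r) ≤ c * s := mul_le_mul_of_nonneg_left hrs hcpos.le
    have hsum : u + w1 + w2 + v = 1 := by linarith
    have l3 : c * (u + w1 + w2 + v) = c := by rw [hsum, mul_one]
    nlinarith [l1, l2, l3]
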